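/- Let n ≥ 5 be odd, m = (2^n+1)/3, and let k ∈ ℕ with k < m. Set x = 9m + 8k (the element (1,3,k) of H). Then D(x) = min{ ν(y) : y ∈ H, y ≥ x } equals ν(x) = 8(k+1). -/

import Mathlib

set_option maxHeartbeats 4000000

/-- Δ-table: for residue classes `c₀` (of `y`) and `c` (of `a`), the amount
`(c + σ - c₀)/8` where `σ` is the partner class of `c`. -/
def dlt : ℕ → ℕ → ℕ := fun c₀ c =>
  (c + (if (c₀ + 16 - c) % 8 = 1 then 9 else (c₀ + 16 - c) % 8) - c₀) / 8

/-- The Feng–Rao designed minimum distance `d_ORD(C_ℓ(P_∞))` for `ρ_{ℓ+1} = (1,3,k)`,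
`k < m`, on `GGS(2,n)` equals `ν(ρ_{ℓ+1}) = 8(k+1)`. -/
theorem stmt_4 (n m : ℕ) (hn : 5 ≤ n) (hodd : Odd n) (hm : 3 * m = 2 ^ n + 1)
    (H : Set ℕ)
    (hH : H = {x | ∃ i ≤ 1, ∃ j ≤ 3, ∃ k : ℕ, x = i * (2 ^ n + 1) + 2 * j * m + 8 * k})
    (ν : ℕ → ℕ)
    (hν : ∀ x, ν x = {p : ℕ × ℕ | p.1 ∈ H ∧ p.2 ∈ H ∧ p.1 + p.2 = x}.ncard)
    (D : ℕ → ℕ)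
    (hD : ∀ x, D x = sInf (ν '' {y : ℕ | y ∈ H ∧ x ≤ y}))
    (k : ℕ) (hk : k < m) :
    D (9 * m + 8 * k) = ν (9 * m + 8 * k) ∧ ν (9 * m + 8 * k) = 8 * (k + 1) := by
  -- setup
  rw [← hm] at hH
  obtain ⟨e, he⟩ : (8:ℕ) ∣ 2 ^ n := by
    have : (2:ℕ)^3 ∣ 2^n := pow_dvd_pow 2 (by omega)
    simpa using this
  have h2n : 32 ≤ 2 ^ n := by
    calc (32:ℕ) = 2 ^ 5 := by norm_num
    _ ≤ 2 ^ n := Nat.pow_le_pow_right (by norm_num) hn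
  rw [he] at hm h2n
  have hm8 : m % 8 = 3 := by omega
  have hm11 : 11 ≤ m := by omega
  clear he h2n hn hodd
  -- membership intro
  have memH : ∀ c t : ℕ, c < 10 → c ≠ 1 → c ≠ 8 → c * m + 8 * t ∈ H := by
    intro c t hc h1 h8
    rw [hH]
    interval_cases c
    · exact ⟨0, by norm_num, 0, by norm_num, t, by ring⟩
    · omega
    · exact ⟨0, by norm_num, 1, by norm_num, t, by ring⟩
    · exact ⟨1, by norm_num, 0, by norm_num, t, by ring⟩
    · exact ⟨0, by norm_num, 2, by norm_num, t, by ring⟩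
    · exact ⟨1, by norm_num, 1, by norm_num, t, by ring⟩
    · exact ⟨0, by norm_num, 3, by norm_num, t, by ring⟩
    · exact ⟨1, by norm_num, 2, by norm_num, t, by ring⟩
    · omega
    · exact ⟨1, by norm_num, 3, by norm_num, t, by ring⟩
  -- membership elim
  have H_elim : ∀ x ∈ H, ∃ c t : ℕ, c < 10 ∧ c ≠ 1 ∧ c ≠ 8 ∧ x = c * m + 8 * t := by
    intro x hx
    rw [hH] at hx
    obtain ⟨i, hi, j, hj, t, ht⟩ := hx
    interval_cases i <;> interval_cases j
    · exact ⟨0, t, by norm_num, by norm_num, by norm_num, by omega⟩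
    · exact ⟨2, t, by norm_num, by norm_num, by norm_num, by omega⟩
    · exact ⟨4, t, by norm_num, by norm_num, by norm_num, by omega⟩
    · exact ⟨6, t, by norm_num, by norm_num, by norm_num, by omega⟩
    · exact ⟨3, t, by norm_num, by norm_num, by norm_num, by omega⟩
    · exact ⟨5, t, by norm_num, by norm_num, by norm_num, by omega⟩
    · exact ⟨7, t, by norm_num, by norm_num, by norm_num, by omega⟩
    · exact ⟨9, t, by norm_num, by norm_num, by norm_num, by omega⟩
  -- lower bound on ν via explicit finsets of pairs
  have nu_ge : ∀ (y : ℕ) (A : Finset ℕ),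
      (∀ a ∈ A, a ∈ H ∧ (y - a) ∈ H ∧ a ≤ y) → A.card ≤ ν y := by
    intro y A hA
    rw [hν]
    have hsub : ↑(A.image (fun a => (a, y - a))) ⊆
        {p : ℕ × ℕ | p.1 ∈ H ∧ p.2 ∈ H ∧ p.1 + p.2 = y} := by
      intro p hp
      simp only [Finset.coe_image, Set.mem_image, Finset.mem_coe] at hp
      obtain ⟨a, ha, rfl⟩ := hp
      obtain ⟨x1, x2, x3⟩ := hA a ha
      exact ⟨x1, x2, by omega⟩
    have hfin : {p : ℕ × ℕ | p.1 ∈ H ∧ p.2 ∈ H ∧ p.1 + p.2 = y}.Finite := by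
      apply Set.Finite.subset ((Finset.range (y+1) ×ˢ Finset.range (y+1)).finite_toSet)
      rintro ⟨p1, p2⟩ ⟨-, -, h⟩
      simp only [Finset.coe_product, Set.mem_prod, Finset.mem_coe, Finset.mem_range]
      omega
    calc A.card = (A.image (fun a => (a, y - a))).card := by
          rw [Finset.card_image_of_injOn]
          intro a _ b _ h
          simpa using congrArg Prod.fst h
    _ = (↑(A.image (fun a => (a, y - a))) : Set (ℕ × ℕ)).ncard := by
          rw [Set.ncard_coe_finset]
    _ ≤ _ := Set.ncard_le_ncard hsub hfin
  have sub_mem : ∀ c σ u y : ℕ, σ < 10 → σ ≠ 1 → σ ≠ 8 →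
      c * m + σ * m + 8 * u ≤ y → (y - (c * m + σ * m + 8 * u)) % 8 = 0 →
      y - (c * m + 8 * u) ∈ H := by
    intro c σ u y h1 h2 h3 hle hmod
    obtain ⟨w, hw⟩ := Nat.dvd_of_mod_eq_zero hmod
    rw [show y - (c * m + 8 * u) = σ * m + 8 * w from by omega]
    exact memH σ w h1 h2 h3
  have card_blocks : ∀ f : ℕ → ℕ, f 1 = 0 → f 8 = 0 →
      ((Finset.range 10).biUnion
        (fun c => (Finset.range (f c)).image (fun u => c * m + 8 * u))).card
      = ∑ c ∈ Finset.range 10, f c := by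
    intro f hf1 hf8
    rw [Finset.card_biUnion]
    · exact Finset.sum_congr rfl fun c _ => by
        rw [Finset.card_image_of_injOn (fun a _ b _ h => by omega), Finset.card_range]
    · intro c hc c' hc' hne
      rw [Function.onFun, Finset.disjoint_left]
      rintro x hx hx'
      simp only [Finset.mem_image, Finset.mem_range] at hx hx'
      obtain ⟨u, hu, rfl⟩ := hx
      obtain ⟨u', hu', h⟩ := hx'
      simp only [Finset.mem_coe, Finset.mem_range] at hc hc'
      interval_cases c <;> interval_cases c' <;> omega
  -- the exact value of ν at 9m+8k
  have count : ν (9 * m + 8 * k) = 8 * (k + 1) := by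
    rw [hν]
    have hset : {p : ℕ × ℕ | p.1 ∈ H ∧ p.2 ∈ H ∧ p.1 + p.2 = 9 * m + 8 * k} =
        ↑(((((Finset.range 10).filter (fun c => c ≠ 1 ∧ c ≠ 8))) ×ˢ Finset.range (k+1)).image
          (fun p => (p.1 * m + 8 * p.2, (9 - p.1) * m + 8 * (k - p.2)))) := by
      ext ⟨a, b⟩
      simp only [Set.mem_setOf_eq, Finset.coe_image, Set.mem_image, Finset.mem_coe,
        Finset.mem_product, Finset.mem_filter, Finset.mem_range, Prod.exists, Prod.mk.injEq]
      constructor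
      · rintro ⟨ha, hb, hab⟩
        obtain ⟨c₁, t₁, hc₁, h1₁, h8₁, rfl⟩ := H_elim a ha
        obtain ⟨c₂, t₂, hc₂, h1₂, h8₂, rfl⟩ := H_elim b hb
        have key : t₁ ≤ k ∧ c₂ * m + 8 * t₂ = (9 - c₁) * m + 8 * (k - t₁) := by
          interval_cases c₁ <;> interval_cases c₂ <;> omega
        exact ⟨c₁, t₁, ⟨⟨hc₁, h1₁, h8₁⟩, by omega⟩, rfl, key.2.symm⟩
      · rintro ⟨c, t, ⟨⟨hc, h1, h8⟩, ht⟩, rfl, rfl⟩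
        refine ⟨memH c t hc h1 h8, memH (9 - c) (k - t) (by omega) (by omega) (by omega), ?_⟩
        interval_cases c <;> omega
    rw [hset, Set.ncard_coe_finset, Finset.card_image_of_injOn, Finset.card_product,
      Finset.card_range]
    · rw [show ((Finset.range 10).filter (fun c => c ≠ 1 ∧ c ≠ 8)).card = 8 from by decide]
    · rintro ⟨c, t⟩ hp ⟨c', t'⟩ hq h
      simp only [Finset.mem_coe, Finset.mem_product, Finset.mem_filter, Finset.mem_range] at hp hq
      simp only [Prod.mk.injEq] at h ⊢
      obtain ⟨⟨hc, h1, h8⟩, ht⟩ := hp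
      obtain ⟨⟨hc', h1', h8'⟩, ht'⟩ := hq
      interval_cases c <;> interval_cases c' <;> omega
  -- the lower bound for every y ∈ H above 9m+8k
  have lower : ∀ c₀ t : ℕ, c₀ < 10 → c₀ ≠ 1 → c₀ ≠ 8 → 9 * m + 8 * k ≤ c₀ * m + 8 * t →
      8 * (k + 1) ≤ ν (c₀ * m + 8 * t) := by
    intro c₀ t hc₀ h1₀ h8₀ hge
    refine le_trans ?_ (nu_ge _ ((Finset.range 10).biUnion
      (fun c => (Finset.range (if c = 1 ∨ c = 8 then 0 else t + 1 - dlt c₀ c * m)).image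
        (fun u => c * m + 8 * u))) ?_)
    · rw [card_blocks _ (by norm_num) (by norm_num)]
      simp only [Finset.sum_range_succ, Finset.sum_range_zero]
      interval_cases c₀ <;> norm_num [dlt] <;> omega
    · intro a ha
      simp only [Finset.mem_biUnion, Finset.mem_image, Finset.mem_range] at ha
      obtain ⟨c, hc, u, hu, rfl⟩ := ha
      have hcc : ¬(c = 1 ∨ c = 8) := by rintro h; rw [if_pos h] at hu; omega
      rw [if_neg hcc] at hu
      refine ⟨memH c u (by omega) (by tauto) (by tauto), ?_, ?_⟩
      · interval_cases c₀ <;> interval_cases c <;> norm_num [dlt] at hu <;>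
        first
        | exact sub_mem _ 0 _ _ (by norm_num) (by norm_num) (by norm_num) (by omega) (by omega)
        | exact sub_mem _ 2 _ _ (by norm_num) (by norm_num) (by norm_num) (by omega) (by omega)
        | exact sub_mem _ 3 _ _ (by norm_num) (by norm_num) (by norm_num) (by omega) (by omega)
        | exact sub_mem _ 4 _ _ (by norm_num) (by norm_num) (by norm_num) (by omega) (by omega)
        | exact sub_mem _ 5 _ _ (by norm_num) (by norm_num) (by norm_num) (by omega) (by omega)
        | exact sub_mem _ 6 _ _ (by norm_num) (by norm_num) (by norm_num) (by omega) (by omega)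
        | exact sub_mem _ 7 _ _ (by norm_num) (by norm_num) (by norm_num) (by omega) (by omega)
        | exact sub_mem _ 9 _ _ (by norm_num) (by norm_num) (by norm_num) (by omega) (by omega)
      · interval_cases c₀ <;> interval_cases c <;> norm_num [dlt] at hu <;> omega
  -- assemble
  refine ⟨?_, count⟩
  rw [hD]
  have hx : 9 * m + 8 * k ∈ H := memH 9 k (by norm_num) (by norm_num) (by norm_num)
  have h1 : ν (9 * m + 8 * k) ∈ ν '' {y : ℕ | y ∈ H ∧ 9 * m + 8 * k ≤ y} :=
    ⟨9 * m + 8 * k, ⟨hx, le_refl _⟩, rfl⟩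
  refine le_antisymm (Nat.sInf_le h1) (le_csInf ⟨_, h1⟩ ?_)
  rintro v ⟨y, ⟨hyH, hyge⟩, rfl⟩
  obtain ⟨c₀, t, hc₀, h1₀, h8₀, rfl⟩ := H_elim y hyH
  rw [count]
  exact lower c₀ t hc₀ h1₀ h8₀ hyge
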